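/- arXiv:1410.5989 — 2 statements merged into one kernel-verified Lean document; each statement's English description precedes it below -/
import Mathlib

section
/- Let G be a finite metahamiltonian p-group with p ≠ 3. Then G/Z(G) has nilpotency class at most 2. -/
open Subgroup
open scoped commutatorElement

universe u

section Helpers
variable {Γ : Type u} [Group Γ]
private lemma commute_of_closure_comm {S : Set Γ} (htop : Subgroup.closure S = ⊤)
    (hS : ∀ a ∈ S, ∀ b ∈ S, Commute a b) (a b : Γ) : Commute a b := by
  have h1 : ∀ s ∈ S, ∀ t : Γ, Commute s t := by
    intro s hs t
    have hle : Subgroup.closure S ≤ Subgroup.centralizer {s} := by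
      rw [Subgroup.closure_le]
      intro u hu
      exact Subgroup.mem_centralizer_iff.2 (by rintro g rfl; exact (hS _ hs u hu).eq)
    exact Subgroup.mem_centralizer_iff.1 (hle (htop ▸ Subgroup.mem_top t)) s rfl
  have hle : Subgroup.closure S ≤ Subgroup.centralizer {b} := by
    rw [Subgroup.closure_le]
    intro u hu
    exact Subgroup.mem_centralizer_iff.2 (fun g hg => by obtain rfl : g = b := hg; exact (h1 u hu g).symm.eq)
  exact (Subgroup.mem_centralizer_iff.1 (hle (htop ▸ Subgroup.mem_top a)) b rfl).symm

/-- Transfer a generating set into the subgroup it generates. -/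
private lemma closure_transfer {K : Subgroup Γ} {S : Set Γ} (hS : S ⊆ (K : Set Γ))
    (hclo : Subgroup.closure S = K) :
    Subgroup.closure {x : ↥K | (x : Γ) ∈ S} = ⊤ := by
  apply Subgroup.map_injective K.subtype_injective
  rw [MonoidHom.map_closure]
  have himg : K.subtype '' {x : ↥K | (x : Γ) ∈ S} = S := by
    ext g
    constructor
    · rintro ⟨x, hx, rfl⟩; exact hx
    · intro hg; exact ⟨⟨g, hS hg⟩, hg, rfl⟩
  rw [himg, hclo]
  have : Subgroup.map K.subtype ⊤ = K.subtype.range := K.subtype.range_eq_map ▸ rfl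
  rw [this, Subgroup.range_subtype]

private lemma pair_lemma {K : Subgroup Γ} {a b : Γ} (ha : a ∈ K) (hb : b ∈ K)
    (hK : Subgroup.closure {a, b} = K)
    (hcent : ∀ k ∈ K, Commute k ⁅a, b⁆) :
    ∀ s t : Γ, s ∈ K → t ∈ K → ⁅s, t⁆ ∈ Subgroup.zpowers ⁅a, b⁆ := by
  set ea : ↥K := ⟨a, ha⟩ with hea
  set eb : ↥K := ⟨b, hb⟩ with heb
  have hcen : ∀ g : ↥K, Commute g ⁅ea, eb⁆ := by
    intro g
    exact Subtype.ext (hcent (g : Γ) g.2).eq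
  haveI hnorm : (Subgroup.zpowers ⁅ea, eb⁆).Normal := by
    constructor
    intro n hn g
    obtain ⟨k, rfl⟩ := Subgroup.mem_zpowers_iff.1 hn
    have heq : g * ⁅ea, eb⁆ ^ k * g⁻¹ = ⁅ea, eb⁆ ^ k := by
      rw [((hcen g).zpow_right k).eq, mul_inv_cancel_right]
    rw [heq]; exact Subgroup.mem_zpowers_iff.2 ⟨k, rfl⟩
  set π := QuotientGroup.mk' (Subgroup.zpowers ⁅ea, eb⁆) with hπ
  have hab : Commute (π ea) (π eb) := by
    rw [← commutatorElement_eq_one_iff_commute, ← map_commutatorElement]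
    exact (QuotientGroup.eq_one_iff _).2 (Subgroup.mem_zpowers _)
  have hclos : Subgroup.closure {ea, eb} = ⊤ := by
    have h1 : Subgroup.closure ({a, b} : Set Γ) = K := hK
    have h2 := closure_transfer (by rw [← h1]; exact Subgroup.subset_closure) h1
    have h3 : {x : ↥K | (x : Γ) ∈ ({a, b} : Set Γ)} = ({ea, eb} : Set ↥K) := by
      ext x
      simp only [Set.mem_setOf_eq, Set.mem_insert_iff, Set.mem_singleton_iff]
      constructor
      · rintro (h | h)
        · left; exact Subtype.ext h
        · right; exact Subtype.ext h
      · rintro (rfl | rfl)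
        · left; rfl
        · right; rfl
    rwa [h3] at h2
  have hQtop : Subgroup.closure ({π ea, π eb} : Set _) = ⊤ := by
    have := Subgroup.map_top_of_surjective π (QuotientGroup.mk'_surjective _)
    rw [← hclos, MonoidHom.map_closure] at this
    rwa [Set.image_insert_eq, Set.image_singleton] at this
  have hQcomm : ∀ q r : ↥K ⧸ Subgroup.zpowers ⁅ea, eb⁆, Commute q r := by
    apply commute_of_closure_comm hQtop
    rintro q (rfl | hq) r (rfl | hr) <;>
      first
        | exact Commute.refl _
        | (try obtain rfl := hq) <;> (try obtain rfl := hr) <;>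
          first | exact hab | exact hab.symm | exact Commute.refl _
  intro s t hs ht
  have hst : π ⁅(⟨s, hs⟩ : ↥K), (⟨t, ht⟩ : ↥K)⁆ = 1 := by
    rw [map_commutatorElement]
    exact (hQcomm _ _).commutator_eq
  have hmem := (QuotientGroup.eq_one_iff _).1 hst
  obtain ⟨k, hk⟩ := Subgroup.mem_zpowers_iff.1 hmem
  refine Subgroup.mem_zpowers_iff.2 ⟨k, ?_⟩
  have := congrArg (Subtype.val) hk
  simpa [hea, heb, commutatorElement_def] using this
private lemma step2core {p : ℕ} (hp : p.Prime) :
    ∀ (n : ℕ) (Γ : Type u) [Group Γ] [Finite Γ], Nat.card Γ ≤ n → IsPGroup p Γ →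
      ∀ u v : Γ, Subgroup.closure {u, ⁅u, v⁆} = ⊤ → Commute u v := by
  haveI : Fact p.Prime := ⟨hp⟩
  intro n
  induction n with
  | zero =>
    intro Γ _ _ hcard _ u v _
    have := Nat.card_pos (α := Γ)
    omega
  | succ n ih =>
    intro Γ _ _ hcard hpG u v htop
    by_cases hcomm : Commute u v
    · exact hcomm
    have hne : ⁅u, v⁆ ≠ 1 := fun h => hcomm (commutatorElement_eq_one_iff_commute.1 h)
    haveI : Nontrivial Γ := ⟨⁅u, v⁆, 1, hne⟩
    haveI := hpG.center_nontrivial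
    set Z := Subgroup.center Γ with hZ
    set π := QuotientGroup.mk' Z with hπ
    have hcard2 : Nat.card (Γ ⧸ Z) ≤ n := by
      have h1 := Subgroup.card_eq_card_quotient_mul_card_subgroup Z
      have h2 : 1 < Nat.card Z := Finite.one_lt_card_iff_nontrivial.2 inferInstance
      have h3 : 0 < Nat.card (Γ ⧸ Z) := Nat.card_pos
      nlinarith
    have htop2 : Subgroup.closure {π u, ⁅π u, π v⁆} = ⊤ := by
      have h0 := Subgroup.map_top_of_surjective π (QuotientGroup.mk'_surjective Z)
      rw [← htop, MonoidHom.map_closure, Set.image_insert_eq, Set.image_singleton,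
        map_commutatorElement] at h0
      exact h0
    have hQ : Commute (π u) (π v) := ih (Γ ⧸ Z) hcard2 (hpG.to_quotient Z) (π u) (π v) htop2
    have hcZ : ⁅u, v⁆ ∈ Z := by
      have h1 : π ⁅u, v⁆ = 1 := by rw [map_commutatorElement]; exact hQ.commutator_eq
      exact (QuotientGroup.eq_one_iff _).1 h1
    have hall : ∀ a b : Γ, Commute a b := by
      apply commute_of_closure_comm htop
      rintro a (rfl | ha) b (rfl | hb)
      · exact Commute.refl _
      · obtain rfl := hb; exact Subgroup.mem_center_iff.1 hcZ a
      · obtain rfl := ha; exact (Subgroup.mem_center_iff.1 hcZ b).symm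
      · obtain rfl := ha; obtain rfl := hb; exact Commute.refl _
    exact hall u v

end Helpers
section Helpers2
variable {Γ : Type u} [Group Γ]
private lemma comm_mid {h z w : Γ} (hz : Commute h z) : ⁅h, z * w⁆ = z * ⁅h, w⁆ * z⁻¹ := by
  have e : h * (z * w) = z * (h * w) := by rw [← mul_assoc, hz.eq, mul_assoc]
  simp only [commutatorElement_def]
  rw [← mul_assoc, ← mul_assoc, ← mul_assoc] at *
  rw [show h * z = z * h from hz.eq]
  group

private lemma comm_split {z₁ u z₂ v : Γ} (ha : Commute u z₂) (hb : Commute z₂ ⁅u, v⁆)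
    (hc : Commute z₁ (z₂ * v)) (hd : Commute z₁ ⁅u, v⁆) :
    ⁅z₁ * u, z₂ * v⁆ = ⁅u, v⁆ := by
  have e1 : ⁅z₁ * u, z₂ * v⁆ = z₁ * ⁅u, z₂ * v⁆ * z₁⁻¹ * ⁅z₁, z₂ * v⁆ := by
    simp only [commutatorElement_def]; group
  rw [e1, hc.commutator_eq, mul_one, comm_mid ha]
  rw [show z₂ * ⁅u, v⁆ * z₂⁻¹ = ⁅u, v⁆ by rw [hb.eq, mul_inv_cancel_right]]
  rw [hd.eq, mul_inv_cancel_right]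

private lemma transfer_pair {K : Subgroup Γ} {a b : Γ} (ha : a ∈ K) (hb : b ∈ K)
    (hclo : Subgroup.closure {a, b} = K) :
    Subgroup.closure {(⟨a, ha⟩ : ↥K), (⟨b, hb⟩ : ↥K)} = ⊤ := by
  have h2 := closure_transfer (by rw [← hclo]; exact Subgroup.subset_closure) hclo
  have h3 : {x : ↥K | (x : Γ) ∈ ({a, b} : Set Γ)} = ({⟨a, ha⟩, ⟨b, hb⟩} : Set ↥K) := by
    ext z
    simp only [Set.mem_setOf_eq, Set.mem_insert_iff, Set.mem_singleton_iff]
    constructor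
    · rintro (h | h)
      · left; exact Subtype.ext h
      · right; exact Subtype.ext h
    · rintro (rfl | rfl)
      · left; rfl
      · right; rfl
  rwa [h3] at h2

end Helpers2
section EngelCenter
variable {p : ℕ} {G : Type u} [Group G] [Finite G]
private lemma conj_pair_central (hp : p.Prime) (hG : IsPGroup p G)
    (hmh : ∀ H : Subgroup G, ¬IsMulCommutative H → H.Normal) (u v x : G)
    (hx : u = x * v * x⁻¹) : ⁅u, v⁆ ∈ Subgroup.center G := by
  by_cases hc1 : ⁅u, v⁆ = 1
  · rw [hc1]; exact Subgroup.one_mem _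
  set c := ⁅u, v⁆ with hcdef
  set H := Subgroup.closure ({u, v} : Set G) with hHdef
  have huH : u ∈ H := Subgroup.subset_closure (Set.mem_insert _ _)
  have hvH : v ∈ H := Subgroup.subset_closure (Set.mem_insert_of_mem _ rfl)
  have hcH : c ∈ H := by
    rw [hcdef, commutatorElement_def]
    exact H.mul_mem (H.mul_mem (H.mul_mem huH hvH) (H.inv_mem huH)) (H.inv_mem hvH)
  have hHnc : ¬ IsMulCommutative H := by
    intro hcomm
    exact hc1 (commutatorElement_eq_one_iff_mul_comm.2
      (Subgroup.mul_comm_of_mem_isMulCommutative (H := H) huH hvH))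
  have hHn : H.Normal := hmh H hHnc
  have hveq : x⁻¹ * u * x⁻¹⁻¹ = v := by rw [hx]; group
  have hueq : x * v * x⁻¹ = u := hx.symm
  have hmin : ∀ K : Subgroup G, K.Normal → (u ∈ K ∨ v ∈ K) → H ≤ K := by
    intro K hK hmem
    rw [hHdef, Subgroup.closure_le]
    rcases hmem with hm | hm
    · rintro w (rfl | hw)
      · exact hm
      · rcases hw with rfl
        rw [← hveq]; exact hK.conj_mem _ hm _
    · rintro w (rfl | hw)
      · rw [← hueq]; exact hK.conj_mem _ hm _
      · rcases hw with rfl; exact hm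
  -- Step 2 : c commutes with u and with v
  have hcu : Commute u c := by
    by_cases hA : IsMulCommutative (Subgroup.closure ({u, c} : Set G))
    · haveI := hA
      exact Subgroup.mul_comm_of_mem_isMulCommutative
        (H := Subgroup.closure ({u, c} : Set G))
        (Subgroup.subset_closure (Set.mem_insert _ _))
        (Subgroup.subset_closure (Set.mem_insert_of_mem _ rfl))
    · exfalso
      have hAn := hmh _ hA
      have h1 : Subgroup.closure ({u, c} : Set G) = H := by
        apply le_antisymm
        · rw [Subgroup.closure_le]
          rintro w (rfl | hw)
          · exact huH
          · rcases hw with rfl; exact hcH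
        · exact hmin _ hAn (Or.inl (Subgroup.subset_closure (Set.mem_insert _ _)))
      have htopH := transfer_pair huH hcH h1
      have hhat : (⟨c, hcH⟩ : ↥H) = ⁅(⟨u, huH⟩ : ↥H), (⟨v, hvH⟩ : ↥H)⁆ :=
        Subtype.ext rfl
      rw [hhat] at htopH
      have hcomm := step2core hp (Nat.card ↥H) ↥H le_rfl (hG.to_subgroup H) _ _ htopH
      have : u * v = v * u := congrArg Subtype.val hcomm.eq
      exact hc1 (commutatorElement_eq_one_iff_mul_comm.2 this)
  have hcv : Commute v c := by
    by_cases hA : IsMulCommutative (Subgroup.closure ({v, c⁻¹} : Set G))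
    · haveI := hA
      have h2 : v * c⁻¹ = c⁻¹ * v := Subgroup.mul_comm_of_mem_isMulCommutative
        (H := Subgroup.closure ({v, c⁻¹} : Set G))
        (Subgroup.subset_closure (Set.mem_insert _ _))
        (Subgroup.subset_closure (Set.mem_insert_of_mem _ rfl))
      have h3 : Commute v c⁻¹ := h2
      simpa using h3.inv_right
    · exfalso
      have hAn := hmh _ hA
      have hciH : c⁻¹ ∈ H := H.inv_mem hcH
      have h1 : Subgroup.closure ({v, c⁻¹} : Set G) = H := by
        apply le_antisymm
        · rw [Subgroup.closure_le]
          rintro w (rfl | hw)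
          · exact hvH
          · rcases hw with rfl; exact hciH
        · exact hmin _ hAn (Or.inr (Subgroup.subset_closure (Set.mem_insert _ _)))
      have htopH := transfer_pair hvH hciH h1
      have hhat : (⟨c⁻¹, hciH⟩ : ↥H) = ⁅(⟨v, hvH⟩ : ↥H), (⟨u, huH⟩ : ↥H)⁆ := by
        apply Subtype.ext
        show c⁻¹ = ⁅v, u⁆
        rw [hcdef, commutatorElement_inv]
      rw [hhat] at htopH
      have hcomm := step2core hp (Nat.card ↥H) ↥H le_rfl (hG.to_subgroup H) _ _ htopH
      have : v * u = u * v := congrArg Subtype.val hcomm.eq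
      exact hc1 (commutatorElement_eq_one_iff_mul_comm.2 this.symm)
  have hcent : ∀ k ∈ H, Commute k c := by
    intro k hk
    have hle : H ≤ Subgroup.centralizer {c} := by
      rw [hHdef, Subgroup.closure_le]
      rintro w (rfl | hw)
      · exact Subgroup.mem_centralizer_iff.2 (by
          rintro g hg; rcases hg with rfl; exact hcu.symm.eq)
      · rcases hw with rfl
        exact Subgroup.mem_centralizer_iff.2 (by
          rintro g hg; rcases hg with rfl; exact hcv.symm.eq)
    exact (Subgroup.mem_centralizer_iff.1 (hle hk) c rfl).symm
  have hpair : ∀ s t : G, s ∈ H → t ∈ H → ⁅s, t⁆ ∈ Subgroup.zpowers c :=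
    pair_lemma huH hvH rfl hcent
  -- Step 3 : c is central in G
  rw [Subgroup.mem_center_iff]
  intro g
  by_cases hgc : Commute g c
  · exact hgc.eq
  exfalso
  set R := Subgroup.closure ({c, g} : Set G) with hRdef
  have hcR : c ∈ R := Subgroup.subset_closure (Set.mem_insert _ _)
  have hgR : g ∈ R := Subgroup.subset_closure (Set.mem_insert_of_mem _ rfl)
  have hRnc : ¬ IsMulCommutative R := by
    intro hcomm
    exact hgc (Subgroup.mul_comm_of_mem_isMulCommutative (H := R) hgR hcR)
  have hRn : R.Normal := hmh R hRnc
  have hconjc : ∀ t : G, t * c * t⁻¹ ∈ Subgroup.zpowers c := by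
    intro t
    rw [hcdef, conjugate_commutatorElement]
    exact hpair _ _ (hHn.conj_mem u huH t) (hHn.conj_mem v hvH t)
  have hconjzc : ∀ (t : G) (k : ℤ), t * c ^ k * t⁻¹ ∈ Subgroup.zpowers c := by
    intro t k
    obtain ⟨m, hm⟩ := Subgroup.mem_zpowers_iff.1 (hconjc t)
    have h1 : t * c ^ k * t⁻¹ = (t * c * t⁻¹) ^ k := conj_zpow.symm
    rw [h1, ← hm, ← zpow_mul]
    exact Subgroup.zpow_mem _ (Subgroup.mem_zpowers c) _
  have hRdesc : ∀ r ∈ R, ∃ k i : ℤ, r = c ^ k * g ^ i := by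
    have hS : R ≤ {
        carrier := {w | ∃ k i : ℤ, w = c ^ k * g ^ i}
        one_mem' := ⟨0, 0, by simp⟩
        mul_mem' := by
          rintro a b ⟨k1, i1, rfl⟩ ⟨k2, i2, rfl⟩
          obtain ⟨m, hm⟩ := Subgroup.mem_zpowers_iff.1 (hconjzc (g ^ i1) k2)
          refine ⟨k1 + m, i1 + i2, ?_⟩
          have h2 : g ^ i1 * c ^ k2 = c ^ m * g ^ i1 := by rw [hm]; group
          calc c ^ k1 * g ^ i1 * (c ^ k2 * g ^ i2)
              = c ^ k1 * (g ^ i1 * c ^ k2) * g ^ i2 := by group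
            _ = c ^ k1 * (c ^ m * g ^ i1) * g ^ i2 := by rw [h2]
            _ = c ^ (k1 + m) * g ^ (i1 + i2) := by rw [zpow_add, zpow_add]; group
        inv_mem' := by
          rintro a ⟨k, i, rfl⟩
          obtain ⟨m, hm⟩ := Subgroup.mem_zpowers_iff.1 (hconjzc (g ^ (-i)) (-k))
          refine ⟨m, -i, ?_⟩
          rw [hm]
          group } := by
      rw [hRdef, Subgroup.closure_le]
      rintro w (rfl | hw)
      · exact ⟨1, 0, by simp⟩
      · rcases hw with rfl; exact ⟨0, 1, by simp⟩
    exact fun r hr => hS hr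
  have hGuR : ⁅g, u⁆ ∈ R := by
    have h1 : u * g⁻¹ * u⁻¹ ∈ R := hRn.conj_mem _ (R.inv_mem hgR) u
    rw [show ⁅g, u⁆ = g * (u * g⁻¹ * u⁻¹) by simp only [commutatorElement_def]; group]
    exact R.mul_mem hgR h1
  have hGuH : ⁅g, u⁆ ∈ H := by
    have h1 : g * u * g⁻¹ ∈ H := hHn.conj_mem _ huH g
    rw [show ⁅g, u⁆ = g * u * g⁻¹ * u⁻¹ by simp only [commutatorElement_def]]
    exact H.mul_mem h1 (H.inv_mem huH)
  have hGvR : ⁅g, v⁆ ∈ R := by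
    have h1 : v * g⁻¹ * v⁻¹ ∈ R := hRn.conj_mem _ (R.inv_mem hgR) v
    rw [show ⁅g, v⁆ = g * (v * g⁻¹ * v⁻¹) by simp only [commutatorElement_def]; group]
    exact R.mul_mem hgR h1
  have hGvH : ⁅g, v⁆ ∈ H := by
    have h1 : g * v * g⁻¹ ∈ H := hHn.conj_mem _ hvH g
    rw [show ⁅g, v⁆ = g * v * g⁻¹ * v⁻¹ by simp only [commutatorElement_def]]
    exact H.mul_mem h1 (H.inv_mem hvH)
  obtain ⟨k1, i1, he1⟩ := hRdesc _ hGuR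
  obtain ⟨k2, i2, he2⟩ := hRdesc _ hGvR
  have hh1H : g ^ i1 ∈ H := by
    rw [show g ^ i1 = (c ^ k1)⁻¹ * ⁅g, u⁆ by rw [he1]; group]
    exact H.mul_mem (H.inv_mem (H.zpow_mem hcH k1)) hGuH
  have hh2H : g ^ i2 ∈ H := by
    rw [show g ^ i2 = (c ^ k2)⁻¹ * ⁅g, v⁆ by rw [he2]; group]
    exact H.mul_mem (H.inv_mem (H.zpow_mem hcH k2)) hGvH
  have hu_conj : g * u * g⁻¹ = c ^ k1 * g ^ i1 * u := by
    rw [show g * u * g⁻¹ = ⁅g, u⁆ * u by simp only [commutatorElement_def]; group, he1]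
  have hv_conj : g * v * g⁻¹ = c ^ k2 * g ^ i2 * v := by
    rw [show g * v * g⁻¹ = ⁅g, v⁆ * v by simp only [commutatorElement_def]; group, he2]
  -- the sub-claim : no element of ⟨g⟩ ∩ H can fail to commute with u or v
  have subclaim : ∀ (j : ℤ) (w : G), g ^ j ∈ H → (w = u ∨ w = v) → ¬ Commute (g ^ j) w → False := by
    intro j w hhH hwor hnc
    have hwH : w ∈ H := by rcases hwor with rfl | rfl; exacts [huH, hvH]
    have hDnc : ¬ IsMulCommutative (Subgroup.closure ({g ^ j, w} : Set G)) := by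
      intro hcm
      haveI := hcm
      exact hnc (Subgroup.mul_comm_of_mem_isMulCommutative
        (H := Subgroup.closure ({g ^ j, w} : Set G))
        (Subgroup.subset_closure (Set.mem_insert _ _))
        (Subgroup.subset_closure (Set.mem_insert_of_mem _ rfl)))
    have hDn := hmh _ hDnc
    have hDH : Subgroup.closure ({g ^ j, w} : Set G) = H := by
      apply le_antisymm
      · rw [Subgroup.closure_le]
        rintro z (rfl | hz)
        · exact hhH
        · rcases hz with rfl; exact hwH
      · refine hmin _ hDn ?_
        rcases hwor with rfl | rfl
        · exact Or.inl (Subgroup.subset_closure (Set.mem_insert_of_mem _ rfl))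
        · exact Or.inr (Subgroup.subset_closure (Set.mem_insert_of_mem _ rfl))
    have hdz : ⁅g ^ j, w⁆ ∈ Subgroup.zpowers c := hpair _ _ hhH hwH
    have hcent_d : ∀ k ∈ H, Commute k ⁅g ^ j, w⁆ := by
      intro k hk
      obtain ⟨m, hm⟩ := Subgroup.mem_zpowers_iff.1 hdz
      rw [← hm]; exact (hcent k hk).zpow_right m
    have hpair_d := pair_lemma hhH hwH hDH hcent_d
    obtain ⟨e, he⟩ := Subgroup.mem_zpowers_iff.1 (hpair_d u v huH hvH)
    obtain ⟨kk, ii, hconjw, hgiiH⟩ :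
        ∃ kk ii : ℤ, g * w * g⁻¹ = c ^ kk * g ^ ii * w ∧ g ^ ii ∈ H := by
      rcases hwor with rfl | rfl
      exacts [⟨k1, i1, hu_conj, hh1H⟩, ⟨k2, i2, hv_conj, hh2H⟩]
    have hgd : g * ⁅g ^ j, w⁆ * g⁻¹ = ⁅g ^ j, w⁆ := by
      rw [conjugate_commutatorElement, show g * g ^ j * g⁻¹ = g ^ j by group, hconjw,
        show c ^ kk * g ^ ii * w = c ^ kk * (g ^ ii * w) by group,
        comm_mid ((hcent _ hhH).zpow_right kk),
        comm_mid ((Commute.refl g).zpow_zpow j ii)]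
      have hdgii : Commute (g ^ ii) ⁅g ^ j, w⁆ := hcent_d _ hgiiH
      have hdc : Commute (c ^ kk) ⁅g ^ j, w⁆ := by
        obtain ⟨m, hm⟩ := Subgroup.mem_zpowers_iff.1 hdz
        rw [← hm]; exact (Commute.refl c).zpow_zpow kk m
      rw [show g ^ ii * ⁅g ^ j, w⁆ * (g ^ ii)⁻¹ = ⁅g ^ j, w⁆ by
            rw [hdgii.eq, mul_inv_cancel_right],
          show c ^ kk * ⁅g ^ j, w⁆ * (c ^ kk)⁻¹ = ⁅g ^ j, w⁆ by
            rw [hdc.eq, mul_inv_cancel_right]]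
    have hfin : g * c * g⁻¹ = c := by
      calc g * c * g⁻¹ = g * ⁅g ^ j, w⁆ ^ e * g⁻¹ := by rw [he]
        _ = (g * ⁅g ^ j, w⁆ * g⁻¹) ^ e := by rw [conj_zpow]
        _ = ⁅g ^ j, w⁆ ^ e := by rw [hgd]
        _ = c := he
    exact hgc (mul_inv_eq_iff_eq_mul.mp hfin)
  have hc1u : Commute (g ^ i1) u := by
    by_contra hnc; exact subclaim i1 u hh1H (Or.inl rfl) hnc
  have hc1v : Commute (g ^ i1) v := by
    by_contra hnc; exact subclaim i1 v hh1H (Or.inr rfl) hnc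
  have hc2u : Commute (g ^ i2) u := by
    by_contra hnc; exact subclaim i2 u hh2H (Or.inl rfl) hnc
  have hc2v : Commute (g ^ i2) v := by
    by_contra hnc; exact subclaim i2 v hh2H (Or.inr rfl) hnc
  have hz2c : Commute (c ^ k2 * g ^ i2) c :=
    Commute.mul_left ((Commute.refl c).zpow_left k2) (hcent _ hh2H)
  have hz1c : Commute (c ^ k1 * g ^ i1) c :=
    Commute.mul_left ((Commute.refl c).zpow_left k1) (hcent _ hh1H)
  have hfin : g * c * g⁻¹ = c := by
    conv_lhs => rw [hcdef, conjugate_commutatorElement, hu_conj, hv_conj]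
    rw [hcdef]
    refine comm_split ?_ ?_ ?_ ?_
    · exact Commute.mul_right (hcu.zpow_right k2) hc2u.symm
    · exact hz2c
    · have hz1z2 : Commute (c ^ k1 * g ^ i1) (c ^ k2 * g ^ i2) :=
        Commute.mul_left
          (Commute.mul_right ((Commute.refl c).zpow_zpow k1 k2)
            ((hcent _ hh2H).symm.zpow_left k1))
          (Commute.mul_right ((hcent _ hh1H).zpow_right k2)
            ((Commute.refl g).zpow_zpow i1 i2))
      have hz1v : Commute (c ^ k1 * g ^ i1) v :=
        Commute.mul_left (hcv.symm.zpow_left k1) hc1v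
      exact hz1z2.mul_right hz1v
    · exact hz1c
  exact hgc (mul_inv_eq_iff_eq_mul.mp hfin)

end EngelCenter
private lemma levi_cube {Q : Type u} [Group Q]
    (hcen : ∀ a b c : Q, ⁅⁅a, b⁆, c⁆ ∈ Subgroup.center Q)
    (heng : ∀ a b : Q, ⁅⁅a, b⁆, b⁆ = 1) (x y z : Q) :
    ⁅⁅x, y⁆, z⁆ ^ 3 = 1 := by
  have hcom : ∀ a b c d : Q, Commute ⁅⁅a, b⁆, c⁆ d := by
    intro a b c d
    have h1 : Commute d ⁅⁅a, b⁆, c⁆ := Subgroup.mem_center_iff.1 (hcen a b c) d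
    exact h1.symm
  have hcancel : ∀ a b c t : Q, t * ⁅⁅a, b⁆, c⁆ * t⁻¹ = ⁅⁅a, b⁆, c⁆ := by
    intro a b c t
    rw [(hcom a b c t).symm.eq, mul_inv_cancel_right]
  have L1 : ∀ a b c d : Q, ⁅⁅a, b⁆, c * d⁆ = ⁅⁅a, b⁆, c⁆ * ⁅⁅a, b⁆, d⁆ := by
    intro a b c d
    have e : ⁅⁅a, b⁆, c * d⁆ = ⁅⁅a, b⁆, c⁆ * (c * ⁅⁅a, b⁆, d⁆ * c⁻¹) := by
      simp only [commutatorElement_def]; group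
    rw [e, hcancel a b d c]
  have L2 : ∀ a b c : Q, ⁅⁅a, b⁆, c⁻¹⁆ = ⁅⁅a, b⁆, c⁆⁻¹ := by
    intro a b c
    have h0 : ⁅⁅a, b⁆, c⁆ * ⁅⁅a, b⁆, c⁻¹⁆ = 1 := by rw [← L1]; simp
    exact (eq_inv_of_mul_eq_one_left h0).symm ▸ (inv_eq_of_mul_eq_one_right h0).symm
  have hsplit : ∀ s t d : Q, s * ⁅t, d⁆ * s⁻¹ = ⁅t, d⁆ → ⁅s * t, d⁆ = ⁅t, d⁆ * ⁅s, d⁆ := by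
    intro s t d hctd
    have e : ⁅s * t, d⁆ = (s * ⁅t, d⁆ * s⁻¹) * ⁅s, d⁆ := by
      simp only [commutatorElement_def]; group
    rw [e, hctd]
  have hzmul : ∀ z t d : Q, (∀ r : Q, Commute z r) → ⁅z * t, d⁆ = ⁅t, d⁆ := by
    intro z t d hz
    have e : ⁅z * t, d⁆ = z * ⁅t, d⁆ * z⁻¹ * ⁅z, d⁆ := by
      simp only [commutatorElement_def]; group
    rw [e, (hz d).commutator_eq, mul_one, (hz ⁅t, d⁆).eq, mul_inv_cancel_right]
  have L3 : ∀ a b c d : Q, ⁅⁅a, b * c⁆, d⁆ = ⁅⁅a, c⁆, d⁆ * ⁅⁅a, b⁆, d⁆ := by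
    intro a b c d
    have hzinv : ∀ r : Q, Commute (⁅⁅a, c⁆, b⁆⁻¹) r := fun r => (hcom a c b r).inv_left
    have e1 : ⁅a, b * c⁆ = ⁅a, b⁆ * (⁅⁅a, c⁆, b⁆⁻¹ * ⁅a, c⁆) := by
      simp only [commutatorElement_def]; group
    have ht : ⁅⁅⁅a, c⁆, b⁆⁻¹ * ⁅a, c⁆, d⁆ = ⁅⁅a, c⁆, d⁆ := hzmul _ _ _ hzinv
    rw [e1, hsplit _ _ _ (by rw [ht]; exact hcancel a c d _), ht]
  have L4 : ∀ a b c d : Q, ⁅⁅a * b, c⁆, d⁆ = ⁅⁅a, c⁆, d⁆ * ⁅⁅b, c⁆, d⁆ := by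
    intro a b c d
    have hzinv : ∀ r : Q, Commute (⁅⁅b, c⁆, a⁆⁻¹) r := fun r => (hcom b c a r).inv_left
    have e1 : ⁅a * b, c⁆ = ⁅⁅b, c⁆, a⁆⁻¹ * (⁅b, c⁆ * ⁅a, c⁆) := by
      simp only [commutatorElement_def]; group
    rw [e1, hzmul _ _ _ hzinv, hsplit _ _ _ (hcancel a c d _)]
  have L5 : ∀ a b c : Q, ⁅⁅a, c⁆, b⁆ = ⁅⁅a, b⁆, c⁆⁻¹ := by
    intro a b c
    have h0 := heng a (b * c)
    rw [L3, L1, L1, heng a c, heng a b, mul_one, one_mul] at h0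
    exact eq_inv_of_mul_eq_one_left h0
  have L6 : ∀ a b c : Q, ⁅⁅b, a⁆, c⁆ = ⁅⁅a, b⁆, c⁆⁻¹ := by
    intro a b c
    have e : ⁅⁅b, a⁆, c⁆ = ⁅a, b⁆⁻¹ * ⁅⁅a, b⁆, c⁆⁻¹ * ⁅a, b⁆ := by
      simp only [commutatorElement_def]; group
    rw [e, ((hcom a b c ⁅a, b⁆).inv_left.inv_right).symm.eq, inv_mul_cancel_right]
  have L2b : ∀ a b c : Q, ⁅⁅a, b⁻¹⁆, c⁆ = ⁅⁅a, b⁆, c⁆⁻¹ := by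
    intro a b c
    have h0 : ⁅⁅a, b⁻¹⁆, c⁆ * ⁅⁅a, b⁆, c⁆ = 1 := by rw [← L3]; simp
    exact eq_inv_of_mul_eq_one_left h0
  have hfact : ∀ a b c : Q, a⁻¹ * ⁅⁅a, b⁻¹⁆, c⁻¹⁆ * a = ⁅⁅a, b⁆, c⁆ := by
    intro a b c
    rw [L2, L2b, inv_inv]
    rw [((hcom a b c a).inv_right).symm.eq, inv_mul_cancel_right]
  have HW : (x⁻¹ * ⁅⁅x, y⁻¹⁆, z⁻¹⁆ * x) * (z⁻¹ * ⁅⁅z, x⁻¹⁆, y⁻¹⁆ * z) *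
      (y⁻¹ * ⁅⁅y, z⁻¹⁆, x⁻¹⁆ * y) = 1 := by
    simp only [commutatorElement_def]; group
  rw [hfact x y z, hfact z x y, hfact y z x] at HW
  have hA : ⁅⁅y, z⁆, x⁆ = ⁅⁅x, y⁆, z⁆ := by rw [L5 y x z, L6 x y z, inv_inv]
  have hB : ⁅⁅z, x⁆, y⁆ = ⁅⁅y, z⁆, x⁆ := by rw [L5 z y x, L6 y z x, inv_inv]
  rw [hB, hA] at HW
  calc ⁅⁅x, y⁆, z⁆ ^ 3 = ⁅⁅x, y⁆, z⁆ * ⁅⁅x, y⁆, z⁆ * ⁅⁅x, y⁆, z⁆ := by rw [pow_succ, pow_two]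
    _ = 1 := HW

private lemma levi_induction {p : ℕ} (hp : p.Prime) (hp3 : p ≠ 3) :
    ∀ (n : ℕ) (Q : Type u) [Group Q] [Finite Q], Nat.card Q ≤ n → IsPGroup p Q →
      (∀ a b : Q, ⁅⁅a, b⁆, b⁆ = 1) → ∀ x y z : Q, ⁅⁅x, y⁆, z⁆ = 1 := by
  haveI : Fact p.Prime := ⟨hp⟩
  intro n
  induction n with
  | zero =>
    intro Q _ _ hcard _ _ x y z
    have := Nat.card_pos (α := Q)
    omega
  | succ n ih =>
    intro Q _ _ hcard hpQ heng x y z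
    by_cases htriv : ∀ a b : Q, Commute a b
    · rw [(htriv x y).commutator_eq, commutatorElement_one_left]
    push_neg at htriv
    obtain ⟨a0, b0, hab⟩ := htriv
    haveI : Nontrivial Q := ⟨a0, 1, fun h => hab (h ▸ Commute.one_left b0)⟩
    haveI := hpQ.center_nontrivial
    set Z := Subgroup.center Q with hZ
    have hcard2 : Nat.card (Q ⧸ Z) ≤ n := by
      have h1 := Subgroup.card_eq_card_quotient_mul_card_subgroup Z
      have h2 : 1 < Nat.card Z := Finite.one_lt_card_iff_nontrivial.2 inferInstance
      have h3 : 0 < Nat.card (Q ⧸ Z) := Nat.card_pos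
      nlinarith
    have hengQ : ∀ a b : Q ⧸ Z, ⁅⁅a, b⁆, b⁆ = 1 := by
      intro a b
      obtain ⟨a', rfl⟩ := QuotientGroup.mk'_surjective Z a
      obtain ⟨b', rfl⟩ := QuotientGroup.mk'_surjective Z b
      rw [← map_commutatorElement, ← map_commutatorElement, heng, map_one]
    have hih := ih (Q ⧸ Z) hcard2 (hpQ.to_quotient Z) hengQ
    have hcen : ∀ a b c : Q, ⁅⁅a, b⁆, c⁆ ∈ Z := by
      intro a b c
      have h1 : (QuotientGroup.mk' Z) ⁅⁅a, b⁆, c⁆ = 1 := by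
        rw [map_commutatorElement, map_commutatorElement]
        exact hih _ _ _
      rw [QuotientGroup.mk'_apply] at h1
      exact (QuotientGroup.eq_one_iff _).1 h1
    have hcube := levi_cube hcen heng x y z
    obtain ⟨k, hk⟩ := hpQ ⁅⁅x, y⁆, z⁆
    have h3 : orderOf ⁅⁅x, y⁆, z⁆ ∣ 3 := orderOf_dvd_of_pow_eq_one hcube
    have hpk : orderOf ⁅⁅x, y⁆, z⁆ ∣ p ^ k := orderOf_dvd_of_pow_eq_one hk
    rcases (Nat.prime_three.eq_one_or_self_of_dvd _ h3) with h1 | h1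
    · exact orderOf_eq_one_iff.1 h1
    · exfalso
      rw [h1] at hpk
      have h2 : (3 : ℕ) ∣ p := Nat.Prime.dvd_of_dvd_pow Nat.prime_three hpk
      exact hp3 ((Nat.prime_dvd_prime_iff_eq Nat.prime_three hp).1 h2).symm

/-- For a finite metahamiltonian p-group with p ≠ 3, the quotient G/Z(G) has
nilpotency class at most 2. -/
theorem metahamiltonian_quotient_center_class_le_two {p : ℕ} (hp : p.Prime)
    (hp3 : p ≠ 3) (G : Type*) [Group G] [Finite G] (hG : IsPGroup p G)
    (hmh : ∀ H : Subgroup G, ¬IsMulCommutative H → H.Normal) :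
    (⊤ : Subgroup (G ⧸ Subgroup.center G)).lowerCentralSeries 2 = ⊥ := by
  have hengel : ∀ x y : G, ⁅⁅x, y⁆, y⁆ ∈ Subgroup.center G := by
    intro x y
    have hkey : ⁅⁅x, y⁆, y⁆ = ⁅x * y * x⁻¹, y⁆ := by
      simp only [commutatorElement_def]; group
    rw [hkey]
    exact conj_pair_central hp hG hmh _ _ x rfl
  have hengQ : ∀ a b : G ⧸ Subgroup.center G, ⁅⁅a, b⁆, b⁆ = 1 := by
    intro a b
    obtain ⟨x, rfl⟩ := QuotientGroup.mk'_surjective (Subgroup.center G) a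
    obtain ⟨y, rfl⟩ := QuotientGroup.mk'_surjective (Subgroup.center G) b
    rw [← map_commutatorElement, ← map_commutatorElement, QuotientGroup.mk'_apply,
      QuotientGroup.eq_one_iff]
    exact hengel x y
  have hall : ∀ x y z : G ⧸ Subgroup.center G, ⁅⁅x, y⁆, z⁆ = 1 :=
    levi_induction hp hp3 (Nat.card (G ⧸ Subgroup.center G)) (G ⧸ Subgroup.center G)
      le_rfl (hG.to_quotient _) hengQ
  have hle : (⊤ : Subgroup (G ⧸ Subgroup.center G)).lowerCentralSeries 1 ≤
      Subgroup.center (G ⧸ Subgroup.center G) := by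
    rw [top_lowerCentralSeries_one, commutator_def]
    rw [Subgroup.commutator_le]
    intro g1 _ g2 _
    rw [Subgroup.mem_center_iff]
    intro z
    have h1 : Commute ⁅g1, g2⁆ z := commutatorElement_eq_one_iff_commute.1 (hall g1 g2 z)
    exact h1.symm.eq
  exact Subgroup.lowerCentralSeries_succ_eq_bot _ hle
end

section
/- Let G be a finite metahamiltonian p-group and x, g ∈ G with [x, x^g] ≠ 1. Then [x, x^g, x] = 1 and [x, x^g]^p = 1. -/
open Subgroup

open scoped commutatorElement

private lemma comm_pow_aux {G : Type*} [Group G] (x y : G)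
    (hc : ⁅x, y⁆ * x = x * ⁅x, y⁆) : ∀ n : ℕ, ⁅x ^ n, y⁆ = ⁅x, y⁆ ^ n := by
  intro n
  induction n with
  | zero => simp
  | succ n ih =>
    have hstep : ⁅x ^ (n + 1), y⁆ = x * ⁅x ^ n, y⁆ * x⁻¹ * ⁅x, y⁆ := by
      simp only [commutatorElement_def, pow_succ']
      group
    have hcomm : Commute x (⁅x, y⁆ ^ n) :=
      (Commute.pow_right (by exact hc.symm) n)
    rw [hstep, ih]
    rw [mul_assoc x, ← hcomm.inv_left.eq, ← mul_assoc, mul_inv_cancel, one_mul, ← pow_succ]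

/-- In a finite metahamiltonian p-group, if [x, x^g] ≠ 1 then [x, x^g, x] = 1
and [x, x^g]^p = 1. -/
theorem comm_conj_relations {p : ℕ} (hp : p.Prime)
    (G : Type*) [Group G] [Finite G] (hG : IsPGroup p G)
    (hmh : ∀ H : Subgroup G, ¬IsMulCommutative H → H.Normal)
    (x g : G) (h : ⁅x, g⁻¹ * x * g⁆ ≠ 1) :
    ⁅⁅x, g⁻¹ * x * g⁆, x⁆ = 1 ∧ ⁅x, g⁻¹ * x * g⁆ ^ p = 1 := by
  haveI : Fact p.Prime := ⟨hp⟩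
  set y := g⁻¹ * x * g with hy
  set K := Subgroup.closure ({x, y} : Set G) with hKdef
  have hxK : x ∈ K := Subgroup.subset_closure (by simp)
  have hyK : y ∈ K := Subgroup.subset_closure (by simp)
  set x' : K := ⟨x, hxK⟩ with hx'
  set y' : K := ⟨y, hyK⟩ with hy'
  have hpK : IsPGroup p K := hG.to_subgroup K
  -- the closure of {x', y'} inside K is everything
  have hcl : Subgroup.closure ({x', y'} : Set K) = ⊤ := by
    apply Subgroup.map_injective K.subtype_injective
    rw [MonoidHom.map_closure]
    have himg : K.subtype '' ({x', y'} : Set K) = {x, y} := by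
      rw [Set.image_insert_eq, Set.image_singleton]
      rfl
    rw [himg, ← hKdef, ← MonoidHom.range_eq_map, K.range_subtype]
  have hgen : ∀ M : Subgroup K, x' ∈ M → y' ∈ M → M = ⊤ := by
    intro M h1 h2
    rw [← top_le_iff, ← hcl]
    refine (Subgroup.closure_le M).2 ?_
    intro z hz
    simp only [Set.mem_insert_iff, Set.mem_singleton_iff] at hz
    rcases hz with rfl | rfl
    · exact h1
    · exact h2
  -- every proper subgroup of K containing x' or y' is commutative
  have key : ∀ M : Subgroup K, (x' ∈ M ∨ y' ∈ M) → M ≠ ⊤ → IsMulCommutative M := by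
    intro M hmem hMtop
    by_contra hMc
    have hmap : ¬ IsMulCommutative (M.map K.subtype) := by
      intro hc
      apply hMc
      haveI := hc
      refine ⟨⟨fun a b => Subtype.ext (Subtype.ext ?_)⟩⟩
      push_cast
      exact Subgroup.mul_comm_of_mem_isMulCommutative (M.map K.subtype)
        (Subgroup.mem_map_of_mem _ a.2) (Subgroup.mem_map_of_mem _ b.2)
    have hnorm := hmh _ hmap
    have hboth : x ∈ M.map K.subtype ∧ y ∈ M.map K.subtype := by
      rcases hmem with hxM | hyM
      · have hxMap : x ∈ M.map K.subtype := ⟨x', hxM, rfl⟩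
        refine ⟨hxMap, ?_⟩
        have := hnorm.conj_mem x hxMap g⁻¹
        simpa [hy, mul_assoc] using this
      · have hyMap : y ∈ M.map K.subtype := ⟨y', hyM, rfl⟩
        refine ⟨?_, hyMap⟩
        have := hnorm.conj_mem y hyMap g
        simpa [hy, mul_assoc] using this
    obtain ⟨⟨x'', hx''M, hx''⟩, ⟨y'', hy''M, hy''⟩⟩ := hboth
    have hx2 : x' ∈ M := by rwa [show x'' = x' from Subtype.ext hx''] at hx''M
    have hy2 : y' ∈ M := by rwa [show y'' = y' from Subtype.ext hy''] at hy''M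
    exact hMtop (hgen M hx2 hy2)
  have hcomm_ne : ⁅x', y'⁆ ≠ 1 := by
    intro hc
    apply h
    have := congrArg K.subtype hc
    rw [map_commutatorElement, map_one] at this
    simpa using this
  -- coatoms above x' and y'
  have hcoat : ∀ z : K, ∃ M : Subgroup K, IsCoatom M ∧ z ∈ M ∨ Subgroup.zpowers z = ⊤ := by
    intro z
    rcases (Finite.to_isCoatomic (α := Subgroup K)).eq_top_or_exists_le_coatom
      (Subgroup.zpowers z) with hz | ⟨M, hM, hle⟩
    · exact ⟨⊤, Or.inr hz⟩
    · exact ⟨M, Or.inl ⟨hM, hle (Subgroup.mem_zpowers z)⟩⟩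
  have hnotcyc : ∀ z : K, Subgroup.zpowers z ≠ ⊤ := by
    intro z hz
    apply hcomm_ne
    rw [commutatorElement_eq_one_iff_commute]
    obtain ⟨m, hm⟩ := hz ▸ Subgroup.mem_top x'
    obtain ⟨n, hn⟩ := hz ▸ Subgroup.mem_top y'
    rw [← hm, ← hn]
    exact (Commute.refl z).zpow_zpow m n
  obtain ⟨Mx, hMx⟩ := hcoat x'
  rcases hMx with ⟨hMxco, hxMx⟩ | htop
  swap
  · exact absurd htop (hnotcyc x')
  obtain ⟨My, hMy⟩ := hcoat y'
  rcases hMy with ⟨hMyco, hyMy⟩ | htop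
  swap
  · exact absurd htop (hnotcyc y')
  -- normality of coatoms
  haveI : Group.IsNilpotent K := hpK.isNilpotent
  have hnc : NormalizerCondition K := normalizerCondition_of_isNilpotent
  haveI hMxn : Mx.Normal := Subgroup.NormalizerCondition.normal_of_coatom _ hnc hMxco
  haveI hMyn : My.Normal := Subgroup.NormalizerCondition.normal_of_coatom _ hnc hMyco
  haveI hMxab : IsMulCommutative Mx := key Mx (Or.inl hxMx) hMxco.1
  haveI hMyab : IsMulCommutative My := key My (Or.inr hyMy) hMyco.1
  -- ⁅x', y'⁆ ∈ Mx
  have hcMx : ⁅x', y'⁆ ∈ Mx := by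
    have h1 : y' * x'⁻¹ * y'⁻¹ ∈ Mx := hMxn.conj_mem _ (Mx.inv_mem hxMx) y'
    have h2 : ⁅x', y'⁆ = x' * (y' * x'⁻¹ * y'⁻¹) := by
      rw [commutatorElement_def]; group
    rw [h2]
    exact Mx.mul_mem hxMx h1
  have hg1 : ⁅⁅x', y'⁆, x'⁆ = 1 := by
    rw [commutatorElement_eq_one_iff_mul_comm]
    exact Subgroup.mul_comm_of_mem_isMulCommutative Mx hcMx hxMx
  -- x' ^ p ∈ My
  have hxpMy : x' ^ p ∈ My := by
    set f := QuotientGroup.mk' My with hf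
    set T := (Subgroup.zpowers (f x' ^ p)).comap f with hT
    have hMyT : My ≤ T := by
      intro t ht
      have h1 : f t = 1 := (QuotientGroup.eq_one_iff t).mpr ht
      simp only [hT, Subgroup.mem_comap, h1]
      exact Subgroup.one_mem _
    rcases eq_or_lt_of_le hMyT with hEq | hLt
    · have hmem : x' ^ p ∈ T := by
        simp only [hT, Subgroup.mem_comap, map_pow]
        exact Subgroup.mem_zpowers _
      rwa [← hEq] at hmem
    · exfalso
      have hTtop : T = ⊤ := hMyco.2 T hLt
      have hxT : x' ∈ T := hTtop ▸ Subgroup.mem_top x'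
      rw [hT, Subgroup.mem_comap] at hxT
      obtain ⟨m, hm⟩ := hxT
      have hne : f x' ≠ 1 := by
        intro h1
        have hxMy : x' ∈ My := (QuotientGroup.eq_one_iff _).mp h1
        exact hMyco.1 (hgen My hxMy hyMy)
      obtain ⟨k, hk⟩ := (hpK.to_quotient My) (f x')
      have hord : orderOf (f x') ∣ p ^ k := orderOf_dvd_of_pow_eq_one hk
      have hord1 : orderOf (f x') ≠ 1 := by simpa [orderOf_eq_one_iff] using hne
      have hpord : p ∣ orderOf (f x') := by
        rcases (Nat.dvd_prime_pow hp).mp hord with ⟨j, _, hjo⟩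
        cases j with
        | zero => exact absurd (by simpa using hjo) hord1
        | succ j => rw [hjo]; exact dvd_pow_self p (Nat.succ_ne_zero j)
      have hzpow : (f x') ^ ((p : ℤ) * m - 1) = 1 := by
        have h2 : (f x') ^ ((p : ℤ) * m) = f x' := by
          rw [zpow_mul, zpow_natCast]; exact hm
        rw [zpow_sub, h2, zpow_one, mul_inv_cancel]
      have hdvd : (orderOf (f x') : ℤ) ∣ ((p : ℤ) * m - 1) :=
        orderOf_dvd_iff_zpow_eq_one.mpr hzpow
      have hpd : (p : ℤ) ∣ ((p : ℤ) * m - 1) :=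
        dvd_trans (Int.natCast_dvd_natCast.mpr hpord) hdvd
      have hpd1 : (p : ℤ) ∣ 1 := (dvd_sub_right ⟨m, rfl⟩).mp hpd
      have h2 := Int.le_of_dvd one_pos hpd1
      have h3 := hp.one_lt
      omega
  have hg2 : ⁅x', y'⁆ ^ p = 1 := by
    have hcx : ⁅x', y'⁆ * x' = x' * ⁅x', y'⁆ :=
      Subgroup.mul_comm_of_mem_isMulCommutative Mx hcMx hxMx
    rw [← comm_pow_aux x' y' hcx p, commutatorElement_eq_one_iff_mul_comm]
    exact Subgroup.mul_comm_of_mem_isMulCommutative My hxpMy hyMy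
  constructor
  · have := congrArg K.subtype hg1
    rw [map_commutatorElement, map_commutatorElement, map_one] at this
    simpa using this
  · have := congrArg K.subtype hg2
    rw [map_pow, map_commutatorElement, map_one] at this
    simpa using this
end
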